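/- Let X, Y, Z be finite sets with |X| = ℓ₁ ≥ 1 and |Y| = ℓ₂ ≥ 1, let ε > 0, and let p be a probability distribution on X × Y × Z such that d_TV(p, q') > ε for every conditionally independent distribution q' on X × Y × Z. Then ∑_{z∈Z} p_Z(z) · ( ∑_{i∈X, j∈Y} (p_z(i,j) − p_{z,X}(i)·p_{z,Y}(j))² )^{1/2} > 2ε/√(ℓ₁·ℓ₂). -/

import Mathlib

open Finset

/-- Total variation distance between two functions on a finite type. -/
noncomputable def dTV {Ω : Type*} [Fintype Ω] (p q : Ω → ℝ) : ℝ :=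
  (1 / 2) * ∑ ω, |p ω - q ω|

/-- The `Z`-marginal of a distribution on `X × Y × Z`. -/
noncomputable def margZ {X Y Z : Type*} [Fintype X] [Fintype Y]
    (p : X × Y × Z → ℝ) (z : Z) : ℝ :=
  ∑ i, ∑ j, p (i, j, z)

/-- The conditional distribution on `X × Y` given `Z = z` (division by zero yields 0). -/
noncomputable def condZ {X Y Z : Type*} [Fintype X] [Fintype Y]
    (p : X × Y × Z → ℝ) (z : Z) : X × Y → ℝ :=
  fun ij => p (ij.1, ij.2, z) / margZ p z

theorem stmt7 {X Y Z : Type*} [Fintype X] [Fintype Y] [Fintype Z]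
    (l1 l2 : ℕ) (hX : Fintype.card X = l1) (hY : Fintype.card Y = l2)
    (hl1 : 1 ≤ l1) (hl2 : 1 ≤ l2)
    (ε : ℝ) (hε : 0 < ε)
    (p : X × Y × Z → ℝ) (hp0 : ∀ ω, 0 ≤ p ω) (hp1 : ∑ ω, p ω = 1)
    (hfar : ∀ q' : X × Y × Z → ℝ, (∀ ω, 0 ≤ q' ω) → (∑ ω, q' ω = 1) →
      (∀ i j z, q' (i, j, z) * margZ q' z =
        (∑ j', q' (i, j', z)) * (∑ i', q' (i', j, z))) →
      dTV p q' > ε) :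
    ∑ z, margZ p z * Real.sqrt (∑ i, ∑ j,
        (condZ p z (i, j) -
          (∑ j', condZ p z (i, j')) * (∑ i', condZ p z (i', j))) ^ 2)
    > 2 * ε / Real.sqrt ((l1 : ℝ) * l2) := by
  classical
  set M : Z → ℝ := margZ p with hMdef
  have hM0 : ∀ z, 0 ≤ M z := fun z =>
    Finset.sum_nonneg fun i _ => Finset.sum_nonneg fun j _ => hp0 _
  have hpz0 : ∀ z, M z = 0 → ∀ i j, p (i, j, z) = 0 := by
    intro z hz i j
    have := (Finset.sum_eq_zero_iff_of_nonneg
      (fun i _ => Finset.sum_nonneg fun j _ => hp0 (i, j, z))).mp hz i (mem_univ i)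
    exact (Finset.sum_eq_zero_iff_of_nonneg (fun j _ => hp0 (i, j, z))).mp this j (mem_univ j)
  have hc0 : ∀ z ij, 0 ≤ condZ p z ij := fun z ij =>
    div_nonneg (hp0 _) (hM0 z)
  have hcsum : ∀ z, M z ≠ 0 → ∑ i, ∑ j, condZ p z (i, j) = 1 := by
    intro z hz
    simp only [condZ, ← Finset.sum_div]
    rw [div_eq_one_iff_eq hz]
    rfl
  set f : Z → X → ℝ := fun z i => ∑ j', condZ p z (i, j') with hfdef
  set g : Z → Y → ℝ := fun z j => ∑ i', condZ p z (i', j) with hgdef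
  have hf0 : ∀ z i, 0 ≤ f z i := fun z i => Finset.sum_nonneg fun _ _ => hc0 _ _
  have hg0 : ∀ z j, 0 ≤ g z j := fun z j => Finset.sum_nonneg fun _ _ => hc0 _ _
  have hfsum : ∀ z, M z ≠ 0 → ∑ i, f z i = 1 := fun z hz => hcsum z hz
  have hgsum : ∀ z, M z ≠ 0 → ∑ j, g z j = 1 := by
    intro z hz
    rw [hgdef]
    rw [Finset.sum_comm]
    exact hcsum z hz
  set q : X × Y × Z → ℝ := fun ω => M ω.2.2 * f ω.2.2 ω.1 * g ω.2.2 ω.2.1 with hqdef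
  have hq0 : ∀ ω, 0 ≤ q ω := fun ω =>
    mul_nonneg (mul_nonneg (hM0 _) (hf0 _ _)) (hg0 _ _)
  have hqz : ∀ z, (∑ i, ∑ j, q (i, j, z)) = M z := by
    intro z
    by_cases hz : M z = 0
    · simp [hqdef, hz]
    · have h : ∑ i, ∑ j, q (i, j, z) = M z * ((∑ i, f z i) * (∑ j, g z j)) := by
        calc ∑ i, ∑ j, q (i, j, z)
            = ∑ i, (M z * f z i) * ∑ j, g z j :=
              Finset.sum_congr rfl fun i _ => by
                simp only [hqdef]
                exact (Finset.mul_sum _ _ _).symm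
          _ = ∑ i, (M z * ∑ j, g z j) * f z i :=
              Finset.sum_congr rfl fun i _ => by ring
          _ = (M z * ∑ j, g z j) * ∑ i, f z i := (Finset.mul_sum _ _ _).symm
          _ = M z * ((∑ i, f z i) * (∑ j, g z j)) := by ring
      rw [h, hfsum z hz, hgsum z hz]; ring
  have hsum_rearr : ∀ r : X × Y × Z → ℝ, ∑ ω, r ω = ∑ z, ∑ i, ∑ j, r (i, j, z) := by
    intro r
    calc ∑ ω, r ω = ∑ i, ∑ j, ∑ z, r (i, j, z) := by
          rw [Fintype.sum_prod_type]
          exact Finset.sum_congr rfl fun i _ => Fintype.sum_prod_type (fun y => r (i, y))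
      _ = ∑ i, ∑ z, ∑ j, r (i, j, z) :=
          Finset.sum_congr rfl fun i _ => Finset.sum_comm
      _ = ∑ z, ∑ i, ∑ j, r (i, j, z) := Finset.sum_comm
  have hMsum : ∑ z, M z = 1 := by
    show ∑ z, ∑ i, ∑ j, p (i, j, z) = 1
    rw [← hsum_rearr p]
    exact hp1
  have hq1 : ∑ ω, q ω = 1 := by
    rw [hsum_rearr q]
    simp only [hqz]
    exact hMsum
  have hqmarg : ∀ z, margZ q z = M z := fun z => hqz z
  have hqCI : ∀ i j z, q (i, j, z) * margZ q z =
      (∑ j', q (i, j', z)) * (∑ i', q (i', j, z)) := by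
    intro i j z
    rw [hqmarg]
    by_cases hz : M z = 0
    · simp [hqdef, hz]
    · have h1 : ∑ j', q (i, j', z) = M z * f z i := by
        have h : ∑ j', q (i, j', z) = (M z * f z i) * ∑ j', g z j' := by
          rw [Finset.mul_sum]
        rw [h, hgsum z hz, mul_one]
      have h2 : ∑ i', q (i', j, z) = M z * g z j := by
        have h : ∑ i', q (i', j, z) = (M z * g z j) * ∑ i', f z i' := by
          rw [Finset.mul_sum]
          exact Finset.sum_congr rfl fun i' _ => by simp only [hqdef]; ring
        rw [h, hfsum z hz, mul_one]
      rw [h1, h2]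
      simp only [hqdef]
      ring
  have hfar' := hfar q hq0 hq1 hqCI
  -- Per-z inner distance and bound
  set T : Z → ℝ := fun z => ∑ i, ∑ j, (condZ p z (i, j) - f z i * g z j) ^ 2 with hTdef
  have hT0 : ∀ z, 0 ≤ T z := fun z =>
    Finset.sum_nonneg fun i _ => Finset.sum_nonneg fun j _ => sq_nonneg _
  have habs : ∀ z, ∑ i, ∑ j, |p (i, j, z) - q (i, j, z)| =
      M z * ∑ i, ∑ j, |condZ p z (i, j) - f z i * g z j| := by
    intro z
    by_cases hz : M z = 0
    · simp only [hz, zero_mul]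
      refine Finset.sum_eq_zero fun i _ => Finset.sum_eq_zero fun j _ => ?_
      simp [hqdef, hz, hpz0 z hz i j]
    · rw [Finset.mul_sum]
      refine Finset.sum_congr rfl fun i _ => ?_
      rw [Finset.mul_sum]
      refine Finset.sum_congr rfl fun j _ => ?_
      have hpij : p (i, j, z) = M z * condZ p z (i, j) := by
        simp only [condZ]
        field_simp
        exact (mul_div_cancel_right₀ _ hz).symm
      rw [hpij]
      have : M z * condZ p z (i, j) - q (i, j, z)
          = M z * (condZ p z (i, j) - f z i * g z j) := by
        simp only [hqdef]; ring
      rw [this, abs_mul, abs_of_nonneg (hM0 z)]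
  -- Cauchy–Schwarz bound on the inner sum
  have hCS : ∀ z, ∑ i, ∑ j, |condZ p z (i, j) - f z i * g z j|
      ≤ Real.sqrt ((l1 : ℝ) * l2) * Real.sqrt (T z) := by
    intro z
    set d : X × Y → ℝ := fun ij => |condZ p z ij - f z ij.1 * g z ij.2| with hddef
    have hsum : ∑ i, ∑ j, |condZ p z (i, j) - f z i * g z j| = ∑ ij : X × Y, d ij := by
      rw [Fintype.sum_prod_type]
    have hTsum : T z = ∑ ij : X × Y, d ij ^ 2 := by
      rw [hTdef, Fintype.sum_prod_type]
      exact Finset.sum_congr rfl fun i _ => Finset.sum_congr rfl fun j _ => (sq_abs _).symm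
    have hcard : ((Finset.univ : Finset (X × Y)).card : ℝ) = (l1 : ℝ) * l2 := by
      rw [Finset.card_univ, Fintype.card_prod, hX, hY, Nat.cast_mul]
    have hkey : (∑ ij : X × Y, d ij) ^ 2 ≤ ((l1 : ℝ) * l2) * ∑ ij : X × Y, d ij ^ 2 := by
      rw [← hcard]
      exact sq_sum_le_card_mul_sum_sq (s := (univ : Finset (X × Y))) (f := d)
    have hd0 : 0 ≤ ∑ ij : X × Y, d ij := Finset.sum_nonneg fun _ _ => abs_nonneg _
    rw [hsum]
    calc ∑ ij : X × Y, d ij = Real.sqrt ((∑ ij : X × Y, d ij) ^ 2) := by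
          rw [Real.sqrt_sq hd0]
      _ ≤ Real.sqrt (((l1 : ℝ) * l2) * ∑ ij : X × Y, d ij ^ 2) := Real.sqrt_le_sqrt hkey
      _ = Real.sqrt ((l1 : ℝ) * l2) * Real.sqrt (T z) := by
          rw [Real.sqrt_mul (by positivity), hTsum]
  -- Put things together
  have hdtv : dTV p q = (1 / 2) * ∑ z, M z * ∑ i, ∑ j, |condZ p z (i, j) - f z i * g z j| := by
    rw [dTV, hsum_rearr fun ω => |p ω - q ω|]
    congr 1
    exact Finset.sum_congr rfl fun z _ => habs z
  have hbound : dTV p q ≤ (1 / 2) * Real.sqrt ((l1 : ℝ) * l2) *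
      ∑ z, M z * Real.sqrt (T z) := by
    rw [hdtv, mul_assoc]
    refine mul_le_mul_of_nonneg_left ?_ (by norm_num)
    rw [Finset.mul_sum]
    refine Finset.sum_le_sum fun z _ => ?_
    rw [show Real.sqrt ((l1:ℝ)*l2) * (M z * Real.sqrt (T z))
        = M z * (Real.sqrt ((l1:ℝ)*l2) * Real.sqrt (T z)) by ring]
    exact mul_le_mul_of_nonneg_left (hCS z) (hM0 z)
  have hsq_pos : 0 < Real.sqrt ((l1 : ℝ) * l2) := by
    apply Real.sqrt_pos.mpr
    have : (1:ℝ) ≤ l1 := by exact_mod_cast hl1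
    have h2 : (1:ℝ) ≤ l2 := by exact_mod_cast hl2
    nlinarith
  have hgoal_eq : ∑ z, M z * Real.sqrt (T z)
      = ∑ z, margZ p z * Real.sqrt (∑ i, ∑ j,
        (condZ p z (i, j) -
          (∑ j', condZ p z (i, j')) * (∑ i', condZ p z (i', j))) ^ 2) := rfl
  rw [← hgoal_eq, gt_iff_lt, div_lt_iff₀ hsq_pos]
  have : ε < (1 / 2) * Real.sqrt ((l1 : ℝ) * l2) * ∑ z, M z * Real.sqrt (T z) :=
    lt_of_lt_of_le hfar' hbound
  nlinarith [this]
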